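/- For α > 0, r > 0, and h > 0, the double time integral over the singular diagonal block ∫_0^h ∫_0^t (4πα(t−τ))^{−3/2} exp(−r²/(4α(t−τ))) dτ dt equals h·(1/(4πα r)) − G^{dτdt}_α(r, h) + r/(8πα²), where G^{dτdt}_α(r,δ) := (1/(4π)) [ (r/(2α²) + δ/(α r)) erf(r/(2√(αδ))) + (√δ/√(πα³)) exp(−r²/(4αδ)) ]. -/

import Mathlib

open Real Filter Set

noncomputable def erf (x : ℝ) : ℝ := (2 / Real.sqrt π) * ∫ t in (0:ℝ)..x, Real.exp (-t^2)

section Aux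
open MeasureTheory Topology

private lemma cexp' : Continuous fun t : ℝ => Real.exp (-t^2) := by continuity

lemma erf_hasDerivAt (x : ℝ) : HasDerivAt erf (2 / Real.sqrt π * Real.exp (-x ^ 2)) x := by
  have h1 : HasDerivAt (fun u => ∫ t in (0:ℝ)..u, Real.exp (-t^2)) (Real.exp (-x^2)) x :=
    intervalIntegral.integral_hasDerivAt_right (cexp'.intervalIntegrable _ _)
      (cexp'.stronglyMeasurableAtFilter _ _) cexp'.continuousAt
  exact h1.const_mul (2 / Real.sqrt π)

lemma continuous_erf : Continuous erf :=
  continuous_iff_continuousAt.2 fun x => (erf_hasDerivAt x).continuousAt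

private lemma intOn' : IntegrableOn (fun t : ℝ => Real.exp (-t^2)) (Ioi 0) := by
  have := (integrable_exp_neg_mul_sq (by norm_num : (0:ℝ) < 1)).integrableOn (s := Ioi 0)
  simpa using this

private lemma intIoi' : ∫ t in Ioi (0:ℝ), Real.exp (-t^2) = Real.sqrt π / 2 := by
  have := integral_gaussian_Ioi 1
  simpa using this

lemma erf_tendsto_one : Tendsto erf atTop (𝓝 1) := by
  have t1 := MeasureTheory.intervalIntegral_tendsto_integral_Ioi 0 intOn' tendsto_id
  have t2 : Tendsto erf atTop (𝓝 ((2 / Real.sqrt π) * (Real.sqrt π / 2))) := by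
    rw [← intIoi']; exact t1.const_mul _
  have hπ : Real.sqrt π ≠ 0 := by positivity
  have : (2 / Real.sqrt π) * (Real.sqrt π / 2) = 1 := by field_simp
  rwa [this] at t2

lemma erf_nonneg' {x : ℝ} (hx : 0 ≤ x) : 0 ≤ erf x := by
  have : 0 ≤ ∫ t in (0:ℝ)..x, Real.exp (-t^2) :=
    intervalIntegral.integral_nonneg hx (fun u _ => (Real.exp_pos _).le)
  have h2 : 0 ≤ 2 / Real.sqrt π := by positivity
  exact mul_nonneg h2 this

lemma erf_le_one' {x : ℝ} (hx : 0 ≤ x) : erf x ≤ 1 := by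
  have hle : ∫ t in (0:ℝ)..x, Real.exp (-t^2) ≤ Real.sqrt π / 2 := by
    rw [intervalIntegral.integral_of_le hx, ← intIoi']
    refine setIntegral_mono_set intOn' ?_ ?_
    · exact Eventually.of_forall fun t => (Real.exp_pos _).le
    · exact (Ioc_subset_Ioi_self).eventuallyLE
  have hπ : (0:ℝ) < Real.sqrt π := Real.sqrt_pos.2 Real.pi_pos
  calc erf x ≤ (2 / Real.sqrt π) * (Real.sqrt π / 2) :=
        mul_le_mul_of_nonneg_left hle (by positivity)
    _ = 1 := by field_simp

lemma u_deriv {α r s : ℝ} (hα : 0 < α) (hs : 0 < s) :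
    HasDerivAt (fun s => r / (2 * Real.sqrt (α * s)))
      (-(r / (4 * s * Real.sqrt (α * s)))) s := by
  have hαs : 0 < α * s := mul_pos hα hs
  have hsq : Real.sqrt (α * s) ≠ 0 := by positivity
  have h1 : HasDerivAt (fun x : ℝ => α * x) α s := by
    simpa using (hasDerivAt_id s).const_mul α
  have h2 : HasDerivAt (fun x : ℝ => Real.sqrt (α * x)) (α / (2 * Real.sqrt (α * s))) s := by
    have := (Real.hasDerivAt_sqrt hαs.ne').comp s h1
    refine this.congr_deriv (Eq.symm ?_); ring
  have h3 : HasDerivAt (fun x : ℝ => 2 * Real.sqrt (α * x)) (2 * (α / (2 * Real.sqrt (α * s)))) s :=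
    h2.const_mul 2
  have h4 := (hasDerivAt_const s r).div h3 (by positivity)
  refine h4.congr_deriv (Eq.symm ?_)
  have hq : (0:ℝ) < Real.sqrt (α*s) := Real.sqrt_pos.2 hαs
  set q := Real.sqrt (α * s) with hqdef
  have h5 : q^2 = α*s := Real.sq_sqrt hαs.le
  field_simp
  linear_combination (-4*r)*h5

private lemma rpow_neg_three_halves {x : ℝ} (hx : 0 < x) :
    x ^ (-(3:ℝ)/2) = (x * Real.sqrt x)⁻¹ := by
  have : x * Real.sqrt x = x ^ ((3:ℝ)/2) := by
    rw [Real.sqrt_eq_rpow, show (3:ℝ)/2 = 1 + 1/2 by norm_num, Real.rpow_add hx, Real.rpow_one]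
  rw [this, ← Real.rpow_neg hx.le, neg_div]

lemma G1_deriv {α r s : ℝ} (hα : 0 < α) (hr : 0 < r) (hs : 0 < s) :
    HasDerivAt (fun s => -(1/(4*π*α*r)) * erf (r / (2*Real.sqrt (α*s))))
      ((4*π*α*s) ^ (-(3:ℝ)/2) * Real.exp (-r^2/(4*α*s))) s := by
  have hαs : 0 < α * s := mul_pos hα hs
  have h1 := ((erf_hasDerivAt (r / (2*Real.sqrt (α*s)))).comp s (u_deriv hα hs)).const_mul
      (-(1/(4*π*α*r)))
  refine h1.congr_deriv (Eq.symm ?_)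
  have hexp : Real.exp (-(r / (2*Real.sqrt (α*s)))^2) = Real.exp (-r^2/(4*α*s)) := by
    congr 1
    rw [div_pow, mul_pow, Real.sq_sqrt hαs.le]
    ring
  rw [hexp, rpow_neg_three_halves (by positivity)]
  have hπ : (0:ℝ) < π := Real.pi_pos
  have hsp : Real.sqrt π > 0 := Real.sqrt_pos.2 hπ
  have hsα : Real.sqrt (α*s) > 0 := Real.sqrt_pos.2 hαs
  have key : Real.sqrt (4*π*α*s) = 2 * Real.sqrt π * Real.sqrt (α*s) := by
    rw [show 4*π*α*s = 2^2 * (π * (α*s)) by ring, Real.sqrt_mul (by positivity),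
      Real.sqrt_sq (by norm_num), Real.sqrt_mul hπ.le]
    ring
  rw [key]
  set q := Real.sqrt (α * s) with hqdef
  set sp := Real.sqrt π with hspdef
  field_simp
  ring

lemma f_tendsto_zero {α r : ℝ} (hα : 0 < α) (hr : 0 < r) :
    Tendsto (fun s : ℝ => (4*π*α*s) ^ (-(3:ℝ)/2) * Real.exp (-r^2/(4*α*s)))
      (𝓝[>] 0) (𝓝 0) := by
  have hb : 0 < r^2/(4*α) := by positivity
  have h0 := tendsto_rpow_mul_exp_neg_mul_atTop_nhds_zero ((3:ℝ)/2) (r^2/(4*α)) hb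
  have h1 := (h0.comp tendsto_inv_nhdsGT_zero).const_mul ((4*π*α) ^ (-(3:ℝ)/2))
  rw [mul_zero] at h1
  refine h1.congr' ?_
  filter_upwards [self_mem_nhdsWithin] with s hs
  have hs : (0:ℝ) < s := hs
  have h2 : (4*π*α*s) ^ (-(3:ℝ)/2) = (4*π*α) ^ (-(3:ℝ)/2) * (s⁻¹) ^ ((3:ℝ)/2) := by
    rw [Real.mul_rpow (by positivity) hs.le, Real.inv_rpow hs.le, ← Real.rpow_neg hs.le]
    rw [neg_div]
  have h3 : -r^2/(4*α*s) = -(r^2/(4*α)) * s⁻¹ := by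
    field_simp
  simp only [Function.comp]
  rw [h2, h3]
  ring

lemma sqrt_tendsto' {α : ℝ} (hα : 0 < α) :
    Tendsto (fun s : ℝ => 2 * Real.sqrt (α*s)) (𝓝[>] 0) (𝓝[>] 0) := by
  rw [tendsto_nhdsWithin_iff]
  constructor
  · have hc : Continuous fun s : ℝ => 2 * Real.sqrt (α*s) :=
      continuous_const.mul ((continuous_const.mul continuous_id).sqrt)
    have := hc.tendsto' 0 0 (by simp)
    exact this.mono_left nhdsWithin_le_nhds
  · filter_upwards [self_mem_nhdsWithin] with s hs
    have h : 0 < α * s := mul_pos hα hs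
    have : 0 < 2 * Real.sqrt (α*s) := by positivity
    exact this

lemma c_tendsto {α r : ℝ} (hα : 0 < α) (hr : 0 < r) :
    Tendsto (fun s : ℝ => r / (2 * Real.sqrt (α*s))) (𝓝[>] 0) atTop := by
  have h1 := tendsto_inv_nhdsGT_zero.comp (sqrt_tendsto' hα)
  have h2 := h1.const_mul_atTop hr
  refine h2.congr fun s => ?_
  simp [div_eq_mul_inv, Function.comp]

lemma f_contOn {α r t : ℝ} (hα : 0 < α) (hr : 0 < r) (ht : 0 < t) :
    ContinuousOn (fun s : ℝ => (4*π*α*s) ^ (-(3:ℝ)/2) * Real.exp (-r^2/(4*α*s)))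
      (Icc 0 t) := by
  intro s hs
  rcases eq_or_lt_of_le hs.1 with h0 | h0
  · rw [ContinuousWithinAt, ← h0]
    have hf0 : (4*π*α*(0:ℝ)) ^ (-(3:ℝ)/2) * Real.exp (-r^2/(4*α*0)) = 0 := by
      rw [mul_zero, Real.zero_rpow (by norm_num), zero_mul]
    rw [hf0]
    have hsub : Icc (0:ℝ) t ⊆ {0} ∪ Ioi 0 := fun x hx => by
      rcases eq_or_lt_of_le hx.1 with h | h
      · exact Or.inl (by simp [← h])
      · exact Or.inr h
    refine Tendsto.mono_left ?_ (nhdsWithin_mono _ hsub)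
    rw [nhdsWithin_union, nhdsWithin_singleton, tendsto_sup]
    constructor
    · rw [Filter.tendsto_pure_left]
      intro u hu
      simpa [hf0] using mem_of_mem_nhds hu
    · exact f_tendsto_zero hα hr
  · have h1 : ContinuousAt (fun s : ℝ => (4*π*α*s) ^ (-(3:ℝ)/2)) s := by
      have hc : ContinuousAt (fun s : ℝ => 4*π*α*s) s := by fun_prop
      exact hc.rpow_const (Or.inl (by positivity))
    have h2 : ContinuousAt (fun s : ℝ => Real.exp (-r^2/(4*α*s))) s := by
      have : ContinuousAt (fun s : ℝ => -r^2/(4*α*s)) s :=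
        continuousAt_const.div (by fun_prop) (by positivity)
      exact this.rexp
    exact (h1.mul h2).continuousWithinAt

lemma inner_value {α r t : ℝ} (hα : 0 < α) (hr : 0 < r) (ht : 0 < t) :
    ∫ s in (0:ℝ)..t, (4*π*α*s) ^ (-(3:ℝ)/2) * Real.exp (-r^2/(4*α*s))
      = (1/(4*π*α*r)) * (1 - erf (r/(2*Real.sqrt (α*t)))) := by
  have hderiv : ∀ s ∈ Ioo (0:ℝ) t,
      HasDerivAt (fun s => -(1/(4*π*α*r)) * erf (r / (2*Real.sqrt (α*s))))
        ((4*π*α*s) ^ (-(3:ℝ)/2) * Real.exp (-r^2/(4*α*s))) s :=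
    fun s hs => G1_deriv hα hr hs.1
  have hint : IntervalIntegrable
      (fun s : ℝ => (4*π*α*s) ^ (-(3:ℝ)/2) * Real.exp (-r^2/(4*α*s))) volume 0 t :=
    (f_contOn hα hr ht).intervalIntegrable_of_Icc ht.le
  have ha : Tendsto (fun s => -(1/(4*π*α*r)) * erf (r / (2*Real.sqrt (α*s))))
      (𝓝[>] (0:ℝ)) (𝓝 (-(1/(4*π*α*r)) * 1)) :=
    (erf_tendsto_one.comp (c_tendsto hα hr)).const_mul _
  have hb : Tendsto (fun s => -(1/(4*π*α*r)) * erf (r / (2*Real.sqrt (α*s))))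
      (𝓝[<] t) (𝓝 (-(1/(4*π*α*r)) * erf (r / (2*Real.sqrt (α*t))))) :=
    ((G1_deriv hα hr ht).continuousAt.tendsto).mono_left nhdsWithin_le_nhds
  rw [intervalIntegral.integral_eq_sub_of_hasDerivAt_of_tendsto ht hderiv hint ha hb]
  ring

lemma erfc_deriv {α r t : ℝ} (hα : 0 < α) (hr : 0 < r) (ht : 0 < t) :
    HasDerivAt (fun t => erf (r / (2*Real.sqrt (α*t))))
      (2 / Real.sqrt π * Real.exp (-r^2/(4*α*t)) * (-(r / (4*t*Real.sqrt (α*t))))) t := by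
  have hαt : 0 < α * t := mul_pos hα ht
  have h := (erf_hasDerivAt (r / (2*Real.sqrt (α*t)))).comp t (u_deriv hα ht)
  refine h.congr_deriv (Eq.symm ?_)
  rw [div_pow, mul_pow, Real.sq_sqrt hαt.le]
  ring

lemma exp_deriv' {α r t : ℝ} (hα : 0 < α) (ht : 0 < t) :
    HasDerivAt (fun t => Real.exp (-r^2/(4*α*t)))
      (Real.exp (-r^2/(4*α*t)) * (r^2/(4*α*t^2))) t := by
  have hinner : HasDerivAt (fun t : ℝ => -r^2/(4*α*t)) (r^2/(4*α*t^2)) t := by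
    have h1 := (hasDerivAt_inv ht.ne').const_mul (-r^2/(4*α))
    have h2 : HasDerivAt (fun t : ℝ => -r^2/(4*α*t)) (-r^2/(4*α) * -(t^2)⁻¹) t := by
      refine h1.congr_of_eventuallyEq ?_
      filter_upwards [eventually_ne_nhds ht.ne'] with s hs
      field_simp
    convert h2 using 1
    field_simp
  simpa [mul_comm] using hinner.exp

lemma H_deriv {α r t : ℝ} (hα : 0 < α) (hr : 0 < r) (ht : 0 < t) :
    HasDerivAt (fun t => t/(4*π*α*r) - (1/(4*π*α*r)) *
        ((r^2/(2*α) + t) * erf (r/(2*Real.sqrt (α*t)))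
          + r/Real.sqrt (π*α) * Real.sqrt t * Real.exp (-r^2/(4*α*t))))
      ((1/(4*π*α*r)) * (1 - erf (r/(2*Real.sqrt (α*t))))) t := by
  have hπ : (0:ℝ) < π := Real.pi_pos
  have hαt : 0 < α * t := mul_pos hα ht
  have hA : HasDerivAt (fun t : ℝ => r^2/(2*α) + t) 1 t := (hasDerivAt_id t).const_add _
  have hprod := hA.mul (erfc_deriv hα hr ht)
  have hc2 := (Real.hasDerivAt_sqrt ht.ne').const_mul (r/Real.sqrt (π*α))
  have hm := hc2.mul (exp_deriv' hα ht (r := r))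
  have hE := hprod.add hm
  have hlin : HasDerivAt (fun t : ℝ => t/(4*π*α*r)) (1/(4*π*α*r)) t := by
    simpa using (hasDerivAt_id t).div_const (4*π*α*r)
  have hH := hlin.sub (hE.const_mul (1/(4*π*α*r)))
  refine hH.congr_deriv (Eq.symm ?_)
  have hsplit : Real.sqrt (α*t) = Real.sqrt α * Real.sqrt t := Real.sqrt_mul hα.le t
  have hsplit2 : Real.sqrt (π*α) = Real.sqrt π * Real.sqrt α := Real.sqrt_mul hπ.le α
  rw [hsplit, hsplit2]
  have hst2 : Real.sqrt t ^ 2 = t := Real.sq_sqrt ht.le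
  have hsa2 : Real.sqrt α ^ 2 = α := Real.sq_sqrt hα.le
  have hsp2 : Real.sqrt π ^ 2 = π := Real.sq_sqrt hπ.le
  have hstpos : 0 < Real.sqrt t := Real.sqrt_pos.2 ht
  have hsapos : 0 < Real.sqrt α := Real.sqrt_pos.2 hα
  have hsppos : 0 < Real.sqrt π := Real.sqrt_pos.2 hπ
  rw [← hst2, ← hsa2, ← hsp2]
  set st := Real.sqrt t
  set sa := Real.sqrt α
  set sp := Real.sqrt π
  set Ex := Real.exp (-r^2/(4*sa^2*st^2)) with hEx
  set er := erf (r/(2*(sa*st))) with her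
  field_simp
  rw [Real.sqrt_sq hstpos.le]
  ring

lemma H_tendsto {α r : ℝ} (hα : 0 < α) (hr : 0 < r) :
    Tendsto (fun t => t/(4*π*α*r) - (1/(4*π*α*r)) *
        ((r^2/(2*α) + t) * erf (r/(2*Real.sqrt (α*t)))
          + r/Real.sqrt (π*α) * Real.sqrt t * Real.exp (-r^2/(4*α*t))))
      (𝓝[>] (0:ℝ)) (𝓝 (0/(4*π*α*r) - (1/(4*π*α*r)) *
        ((r^2/(2*α) + 0) * 1 + r/Real.sqrt (π*α) * Real.sqrt 0 * 0))) := by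
  have h1 : Tendsto (fun t : ℝ => t/(4*π*α*r)) (𝓝[>] (0:ℝ)) (𝓝 (0/(4*π*α*r))) :=
    ((continuous_id.div_const _).tendsto 0).mono_left nhdsWithin_le_nhds
  have h2 : Tendsto (fun t : ℝ => r^2/(2*α) + t) (𝓝[>] (0:ℝ)) (𝓝 (r^2/(2*α) + 0)) :=
    ((continuous_const.add continuous_id).tendsto 0).mono_left nhdsWithin_le_nhds
  have h3 : Tendsto (fun t : ℝ => erf (r/(2*Real.sqrt (α*t)))) (𝓝[>] (0:ℝ)) (𝓝 1) :=
    erf_tendsto_one.comp (c_tendsto hα hr)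
  have h4 : Tendsto (fun t : ℝ => r/Real.sqrt (π*α) * Real.sqrt t) (𝓝[>] (0:ℝ))
      (𝓝 (r/Real.sqrt (π*α) * Real.sqrt 0)) :=
    ((continuous_const.mul Real.continuous_sqrt).tendsto 0).mono_left nhdsWithin_le_nhds
  have h5 : Tendsto (fun t : ℝ => Real.exp (-r^2/(4*α*t))) (𝓝[>] (0:ℝ)) (𝓝 0) := by
    refine Real.tendsto_exp_atBot.comp ?_
    have hb : 0 < r^2/(4*α) := by positivity
    have h6 := (tendsto_inv_nhdsGT_zero.const_mul_atTop hb)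
    have h7 := tendsto_neg_atTop_atBot.comp h6
    refine h7.congr' ?_
    filter_upwards [self_mem_nhdsWithin] with s hs
    have hs : (0:ℝ) < s := hs
    simp only [Function.comp]
    field_simp
  exact h1.sub (((h2.mul h3).add ((h4.mul h5))).const_mul _)

lemma F_integrable {α r h : ℝ} (hα : 0 < α) (hr : 0 < r) (hh : 0 < h) :
    IntervalIntegrable
      (fun t : ℝ => (1/(4*π*α*r)) * (1 - erf (r/(2*Real.sqrt (α*t))))) volume 0 h := by
  refine (intervalIntegrable_const (c := 1/(4*π*α*r))).mono_fun' ?_ ?_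
  · refine (Measurable.aestronglyMeasurable ?_)
    refine (measurable_const.mul ?_)
    refine measurable_const.sub (continuous_erf.measurable.comp ?_)
    exact measurable_const.div ((continuous_const.mul
      ((continuous_const.mul continuous_id).sqrt)).measurable)
  · refine Eventually.of_forall fun t => ?_
    have hx : 0 ≤ r/(2*Real.sqrt (α*t)) := div_nonneg hr.le (by positivity)
    have h1 := erf_nonneg' hx
    have h2 := erf_le_one' hx
    have hc : (0:ℝ) < 1/(4*π*α*r) := by positivity
    simp only []
    rw [Real.norm_eq_abs, abs_mul, abs_of_pos hc]
    calc (1/(4*π*α*r)) * |1 - erf (r/(2*Real.sqrt (α*t)))|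
        ≤ (1/(4*π*α*r)) * 1 := by
          apply mul_le_mul_of_nonneg_left _ hc.le
          rw [abs_of_nonneg (by linarith)]; linarith
      _ = 1/(4*π*α*r) := mul_one _

end Aux

open MeasureTheory Topology in
theorem stmt15 (α r h : ℝ) (hα : 0 < α) (hr : 0 < r) (hh : 0 < h) :
    ∫ t in (0:ℝ)..h,
        ∫ τ in (0:ℝ)..t,
          (4 * π * α * (t - τ)) ^ (-(3:ℝ)/2) * Real.exp (-r^2 / (4 * α * (t - τ)))
      = h * (1 / (4 * π * α * r))
        - (1 / (4 * π)) *
            ((r / (2 * α^2) + h / (α * r)) * erf (r / (2 * Real.sqrt (α * h)))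
              + Real.sqrt h / Real.sqrt (π * α^3) * Real.exp (-r^2 / (4 * α * h)))
        + r / (8 * π * α^2) := by
  have hπ : (0:ℝ) < π := Real.pi_pos
  have hcong : ∀ᵐ t ∂(volume : Measure ℝ), t ∈ Set.uIoc (0:ℝ) h →
      (∫ τ in (0:ℝ)..t, (4 * π * α * (t - τ)) ^ (-(3:ℝ)/2) * Real.exp (-r^2 / (4 * α * (t - τ))))
        = (1/(4*π*α*r)) * (1 - erf (r/(2*Real.sqrt (α*t)))) := by
    refine Eventually.of_forall fun t ht => ?_
    rw [uIoc_of_le hh.le] at ht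
    have ht0 : 0 < t := ht.1
    have hsub := intervalIntegral.integral_comp_sub_left
      (a := (0:ℝ)) (b := t)
      (fun s => (4*π*α*s) ^ (-(3:ℝ)/2) * Real.exp (-r^2/(4*α*s))) t
    simp only [sub_zero, sub_self] at hsub
    rw [hsub, inner_value hα hr ht0]
  rw [intervalIntegral.integral_congr_ae hcong]
  have hderiv : ∀ t ∈ Ioo (0:ℝ) h,
      HasDerivAt (fun t => t/(4*π*α*r) - (1/(4*π*α*r)) *
          ((r^2/(2*α) + t) * erf (r/(2*Real.sqrt (α*t)))
            + r/Real.sqrt (π*α) * Real.sqrt t * Real.exp (-r^2/(4*α*t))))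
        ((1/(4*π*α*r)) * (1 - erf (r/(2*Real.sqrt (α*t))))) t :=
    fun t ht => H_deriv hα hr ht.1
  have hb : Tendsto (fun t => t/(4*π*α*r) - (1/(4*π*α*r)) *
          ((r^2/(2*α) + t) * erf (r/(2*Real.sqrt (α*t)))
            + r/Real.sqrt (π*α) * Real.sqrt t * Real.exp (-r^2/(4*α*t))))
      (𝓝[<] h)
      (𝓝 (h/(4*π*α*r) - (1/(4*π*α*r)) *
          ((r^2/(2*α) + h) * erf (r/(2*Real.sqrt (α*h)))
            + r/Real.sqrt (π*α) * Real.sqrt h * Real.exp (-r^2/(4*α*h))))) :=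
    ((H_deriv hα hr hh).continuousAt.tendsto).mono_left nhdsWithin_le_nhds
  rw [intervalIntegral.integral_eq_sub_of_hasDerivAt_of_tendsto hh hderiv
    (F_integrable hα hr hh) (H_tendsto hα hr) hb]
  have hsq3 : Real.sqrt (π*α^3) = α * Real.sqrt (π*α) := by
    rw [show π*α^3 = (π*α)*α^2 by ring, Real.sqrt_mul (by positivity), Real.sqrt_sq hα.le]
    ring
  rw [hsq3, Real.sqrt_zero]
  have hπα : (0:ℝ) < Real.sqrt (π*α) := Real.sqrt_pos.2 (by positivity)
  set er := erf (r / (2 * Real.sqrt (α * h))) with her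
  set Ex := Real.exp (-r^2 / (4 * α * h)) with hEx
  set q := Real.sqrt (π*α) with hq
  field_simp
  ring
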